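/- If E is an sc-Banach space (a nested sequence of Banach spaces E_0 ⊇ E_1 ⊇ ... with compact inclusions E_{i+1} → E_i and E_∞ = ∩ E_i dense in every E_m), then a finite-dimensional linear subspace F ⊆ E_0 admits an sc-complement (an sc-subspace G with F ⊕ G_i = E_i topologically for all i) if and only if F ⊆ E_∞. -/

import Mathlib

/-- An sc-structure on a Banach space `E`: a nested sequence of Banach spaces
`E = E₀ ⊇ E₁ ⊇ E₂ ⊇ ⋯`, each level `Eᵢ = level i` carrying its own complete
norm `lnorm i`, such that the inclusion `E_{i+1} → E_i` is a compact operator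
and `E_∞ = ⋂ᵢ Eᵢ` is dense in every level. -/
structure ScBanach (E : Type*) [NormedAddCommGroup E] [NormedSpace ℝ E] where
  level : ℕ → Submodule ℝ E
  level_zero : level 0 = ⊤
  level_antitone : ∀ i, level (i + 1) ≤ level i
  lnorm : ℕ → E → ℝ
  lnorm_zero_eq : ∀ x, lnorm 0 x = ‖x‖
  lnorm_nonneg : ∀ i x, 0 ≤ lnorm i x
  lnorm_eq_zero : ∀ i, ∀ x ∈ level i, (lnorm i x = 0 ↔ x = 0)
  lnorm_add : ∀ i, ∀ x ∈ level i, ∀ y ∈ level i,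
      lnorm i (x + y) ≤ lnorm i x + lnorm i y
  lnorm_smul : ∀ i (c : ℝ) (x : E), lnorm i (c • x) = |c| * lnorm i x
  /-- the inclusion of level `i+1` into level `i` is a bounded operator -/
  incl_bounded : ∀ i, ∃ C > 0, ∀ x ∈ level (i + 1), lnorm i x ≤ C * lnorm (i + 1) x
  /-- compactness of the inclusion `E_{i+1} → E_i` -/
  incl_compact : ∀ i (u : ℕ → E), (∀ n, u n ∈ level (i + 1)) →
      (∃ C, ∀ n, lnorm (i + 1) (u n) ≤ C) →
      ∃ φ : ℕ → ℕ, StrictMono φ ∧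
        ∀ ε > 0, ∃ N, ∀ p ≥ N, ∀ q ≥ N, lnorm i (u (φ p) - u (φ q)) < ε
  /-- each level is a Banach space -/
  level_complete : ∀ i (u : ℕ → E), (∀ n, u n ∈ level i) →
      (∀ ε > 0, ∃ N, ∀ p ≥ N, ∀ q ≥ N, lnorm i (u p - u q) < ε) →
      ∃ x ∈ level i, ∀ ε > 0, ∃ N, ∀ n ≥ N, lnorm i (u n - x) < ε
  /-- `E_∞ = ⋂ᵢ Eᵢ` is dense in every level -/
  smooth_dense : ∀ m, ∀ x ∈ level m, ∀ ε > 0,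
      ∃ y ∈ ⨅ i, level i, lnorm m (x - y) < ε

namespace ScBanach

variable {E : Type*} [NormedAddCommGroup E] [NormedSpace ℝ E]

/-- The smooth points `E_∞ = ⋂ᵢ Eᵢ`. -/
def smoothPoints (S : ScBanach E) : Submodule ℝ E := ⨅ i, S.level i

/-- `F` is an sc-subspace: the induced filtration `Fᵢ = F ∩ Eᵢ` again satisfies
the sc-axioms of completeness on every level and density of the smooth points. -/
def IsScSubspace (S : ScBanach E) (F : Submodule ℝ E) : Prop :=
  (∀ i (u : ℕ → E), (∀ n, u n ∈ F ⊓ S.level i) →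
      (∀ ε > 0, ∃ N, ∀ p ≥ N, ∀ q ≥ N, S.lnorm i (u p - u q) < ε) →
      ∃ x ∈ F ⊓ S.level i, ∀ ε > 0, ∃ N, ∀ n ≥ N, S.lnorm i (u n - x) < ε) ∧
  (∀ m, ∀ x ∈ F ⊓ S.level m, ∀ ε > 0,
      ∃ y ∈ F ⊓ S.smoothPoints, S.lnorm m (x - y) < ε)

/-- `F` has an sc-complement: there is an sc-subspace `G` such that on every
level `Fᵢ ⊕ Gᵢ = Eᵢ` as a topological direct sum. -/
def HasScComplement (S : ScBanach E) (F : Submodule ℝ E) : Prop :=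
  ∃ G : Submodule ℝ E, S.IsScSubspace G ∧ F ⊓ G = ⊥ ∧
    (∀ i, (F ⊓ S.level i) ⊔ (G ⊓ S.level i) = S.level i) ∧
    -- topological direct sum: the projection onto `Fᵢ` along `Gᵢ` is bounded
    ∀ i, ∃ C > 0, ∀ x ∈ F ⊓ S.level i, ∀ y ∈ G ⊓ S.level i,
      S.lnorm i x ≤ C * S.lnorm i (x + y)

end ScBanach
namespace ScBanach

variable {E : Type*} [NormedAddCommGroup E] [NormedSpace ℝ E]

lemma lnorm_zero' (S : ScBanach E) (i : ℕ) : S.lnorm i 0 = 0 := by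
  have h := S.lnorm_smul i 0 0
  simpa using h

lemma lnorm_neg' (S : ScBanach E) (i : ℕ) (x : E) : S.lnorm i (-x) = S.lnorm i x := by
  have h := S.lnorm_smul i (-1) x
  simpa using h

lemma smoothPoints_le' (S : ScBanach E) (i : ℕ) : S.smoothPoints ≤ S.level i :=
  iInf_le _ i

lemma mem_smoothPoints' (S : ScBanach E) (x : E) :
    x ∈ S.smoothPoints ↔ ∀ i, x ∈ S.level i := by
  simp [smoothPoints, Submodule.mem_iInf]

lemma chain_bound (S : ScBanach E) (i : ℕ) :
    ∃ D > 0, ∀ x ∈ S.level i, S.lnorm 0 x ≤ D * S.lnorm i x := by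
  induction i with
  | zero => exact ⟨1, one_pos, fun x _ => by simp⟩
  | succ i ih =>
    obtain ⟨D, hD, hle⟩ := ih
    obtain ⟨C, hC, hCle⟩ := S.incl_bounded i
    refine ⟨D * C, by positivity, fun x hx => ?_⟩
    have h1 := hle x (S.level_antitone i hx)
    have h2 := hCle x hx
    nlinarith [S.lnorm_nonneg (i + 1) x, S.lnorm_nonneg i x]

lemma lnorm_sum_le (S : ScBanach E) (i : ℕ) {ι : Type*} (s : Finset ι) (g : ι → E) :
    (∀ j ∈ s, g j ∈ S.level i) →
    S.lnorm i (∑ j ∈ s, g j) ≤ ∑ j ∈ s, S.lnorm i (g j) := by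
  classical
  induction s using Finset.cons_induction with
  | empty => intro _; simp [S.lnorm_zero']
  | cons a t ha ih =>
    intro hg
    have h1 : g a ∈ S.level i := hg a (Finset.mem_cons_self a t)
    have h2 : (∑ j ∈ t, g j) ∈ S.level i :=
      Submodule.sum_mem _ (fun j hj => hg j (Finset.mem_cons_of_mem hj))
    have h3 := S.lnorm_add i (g a) h1 (∑ j ∈ t, g j) h2
    have h4 := ih (fun j hj => hg j (Finset.mem_cons_of_mem hj))
    simp only [Finset.sum_cons]
    linarith

lemma proj_bound (S : ScBanach E) (F : Submodule ℝ E) [FiniteDimensional ℝ F]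
    (hF : F ≤ S.smoothPoints) (f : E →L[ℝ] F) (i : ℕ) :
    ∃ K ≥ 0, ∀ x : E, S.lnorm i ((f x : E)) ≤ K * ‖x‖ := by
  classical
  set n := Module.finrank ℝ F with hn
  set b : Module.Basis (Fin n) ℝ F := Module.finBasis ℝ F with hb
  have hcoord : ∀ j, ∃ M ≥ 0, ∀ x : E, |b.repr (f x) j| ≤ M * ‖x‖ := by
    intro j
    set ℓ : E →L[ℝ] ℝ := (LinearMap.toContinuousLinearMap (b.coord j)).comp f with hℓ
    refine ⟨‖ℓ‖, norm_nonneg _, fun x => ?_⟩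
    have h := ℓ.le_opNorm x
    simpa [hℓ, Real.norm_eq_abs, Module.Basis.coord_apply] using h
  choose M hM0 hM using hcoord
  refine ⟨∑ j, M j * S.lnorm i ((b j : E)),
    Finset.sum_nonneg (fun j _ => mul_nonneg (hM0 j) (S.lnorm_nonneg i _)), fun x => ?_⟩
  have hmem : ∀ j : Fin n, ((b j : F) : E) ∈ S.level i :=
    fun j => S.smoothPoints_le' i (hF (b j).2)
  have hrepr : (f x : E) = ∑ j, b.repr (f x) j • ((b j : F) : E) := by
    have h := b.sum_repr (f x)
    calc (f x : E) = ((∑ j, b.repr (f x) j • b j : F) : E) := by rw [h]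
      _ = ∑ j, b.repr (f x) j • ((b j : F) : E) := by
          push_cast
          rfl
  rw [hrepr]
  have h1 := S.lnorm_sum_le i Finset.univ (fun j => b.repr (f x) j • ((b j : F) : E))
    (fun j _ => Submodule.smul_mem _ _ (hmem j))
  calc S.lnorm i (∑ j, b.repr (f x) j • ((b j : F) : E))
      ≤ ∑ j, S.lnorm i (b.repr (f x) j • ((b j : F) : E)) := h1
    _ = ∑ j, |b.repr (f x) j| * S.lnorm i ((b j : E)) := by
        refine Finset.sum_congr rfl (fun j _ => ?_)
        exact S.lnorm_smul i _ _
    _ ≤ ∑ j, (M j * ‖x‖) * S.lnorm i ((b j : E)) :=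
        Finset.sum_le_sum (fun j _ =>
          mul_le_mul_of_nonneg_right (hM j x) (S.lnorm_nonneg i _))
    _ = (∑ j, M j * S.lnorm i ((b j : E))) * ‖x‖ := by
        rw [Finset.sum_mul]
        exact Finset.sum_congr rfl (fun j _ => by ring)

end ScBanach
/-- A finite-dimensional subspace `F` of an sc-Banach space `E` admits an
sc-complement if and only if `F ⊆ E_∞`. -/
theorem finiteDimensional_hasScComplement_iff_le_smoothPoints
    {E : Type*} [NormedAddCommGroup E] [NormedSpace ℝ E] [CompleteSpace E]
    (S : ScBanach E) (F : Submodule ℝ E) [FiniteDimensional ℝ F] :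
    S.HasScComplement F ↔ F ≤ S.smoothPoints := by
  constructor
  · -- forward direction
    rintro ⟨G, hG, hdisj, hsup, hbdd⟩
    intro x hxF
    set W := F ⊓ S.smoothPoints with hW
    haveI : FiniteDimensional ℝ W := Submodule.finiteDimensional_of_le inf_le_left
    have hWclosed : IsClosed (W : Set E) := Submodule.closed_of_finiteDimensional W
    obtain ⟨C, hC, hCb⟩ := hbdd 0
    have hmemtop : ∀ z : E, z ∈ S.level 0 := by
      intro z; rw [S.level_zero]; trivial
    have hx_cl : x ∈ closure (W : Set E) := by
      rw [Metric.mem_closure_iff]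
      intro ε hε
      obtain ⟨y, hy, hxy⟩ := S.smooth_dense 0 x (hmemtop x) (ε / C) (by positivity)
      have hy' : ∀ i, y ∈ S.level i := fun i => (S.mem_smoothPoints' y).mp hy i
      have hdecomp : ∀ i, ∃ fi ∈ F ⊓ S.level i, ∃ gi ∈ G ⊓ S.level i, fi + gi = y := by
        intro i
        have h := hy' i
        rw [← hsup i] at h
        exact Submodule.mem_sup.mp h
      obtain ⟨f0, hf0, g0, hg0, hfg0⟩ := hdecomp 0
      have hf0F : f0 ∈ F := (Submodule.mem_inf.mp hf0).1
      have hg0G : g0 ∈ G := (Submodule.mem_inf.mp hg0).1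
      have hf0smooth : f0 ∈ S.smoothPoints := by
        rw [S.mem_smoothPoints']
        intro i
        obtain ⟨fi, hfi, gi, hgi, hfgi⟩ := hdecomp i
        have heq : fi = f0 := by
          have hmem : fi - f0 ∈ F ⊓ G := by
            rw [Submodule.mem_inf]
            constructor
            · exact Submodule.sub_mem F (Submodule.mem_inf.mp hfi).1 hf0F
            · have h3 : fi + gi = f0 + g0 := hfgi.trans hfg0.symm
              have h2 : fi - f0 = g0 - gi := by
                rw [sub_eq_sub_iff_add_eq_add]
                exact h3.trans (add_comm f0 g0)
              rw [h2]
              exact Submodule.sub_mem G hg0G (Submodule.mem_inf.mp hgi).1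
          rw [hdisj, Submodule.mem_bot] at hmem
          exact sub_eq_zero.mp hmem
        rw [← heq]
        exact (Submodule.mem_inf.mp hfi).2
      refine ⟨f0, ?_, ?_⟩
      · exact Submodule.mem_inf.mpr ⟨hf0F, hf0smooth⟩
      · have hgmem : f0 - y ∈ G ⊓ S.level 0 := by
          rw [Submodule.mem_inf]
          constructor
          · have h6 : f0 - y = -g0 := by rw [← hfg0]; abel
            rw [h6]; exact Submodule.neg_mem G hg0G
          · exact hmemtop _
        have hkey := hCb (x - f0)
          (Submodule.mem_inf.mpr ⟨Submodule.sub_mem F hxF hf0F, hmemtop _⟩) (f0 - y) hgmem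
        have hsum : (x - f0) + (f0 - y) = x - y := sub_add_sub_cancel x f0 y
        rw [hsum, S.lnorm_zero_eq, S.lnorm_zero_eq] at hkey
        have hxy' : ‖x - y‖ < ε / C := by rw [← S.lnorm_zero_eq]; exact hxy
        have h5 : C * ‖x - y‖ < C * (ε / C) := mul_lt_mul_of_pos_left hxy' hC
        have h7 : C * (ε / C) = ε := by field_simp
        rw [dist_eq_norm]
        linarith
    have hxW : x ∈ W := by
      have h8 : closure (W : Set E) = (W : Set E) := hWclosed.closure_eq
      rw [h8] at hx_cl
      exact hx_cl
    exact (Submodule.mem_inf.mp hxW).2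
  · -- backward direction
    intro hF
    obtain ⟨f, hf⟩ := Submodule.ClosedComplemented.of_finiteDimensional F
    have hfx_mem : ∀ (x : E) (i : ℕ), ((f x : F) : E) ∈ S.level i :=
      fun x i => S.smoothPoints_le' i (hF (f x).2)
    have hfx_smooth : ∀ x : E, ((f x : F) : E) ∈ S.smoothPoints := fun x => hF (f x).2
    have hPF : ∀ x ∈ F, ((f x : F) : E) = x := by
      intro x hx
      exact congrArg Subtype.val (hf ⟨x, hx⟩)
    set G : Submodule ℝ E := LinearMap.ker (f : E →ₗ[ℝ] F) with hGdef
    have hGmem : ∀ x : E, x ∈ G ↔ f x = 0 := fun x => LinearMap.mem_ker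
    have hsub_mem_G : ∀ x : E, x - ((f x : F) : E) ∈ G := by
      intro x
      rw [hGmem]
      have h1 : f (((f x : F) : E)) = f x := hf (f x)
      rw [map_sub, h1, sub_self]
    refine ⟨G, ⟨?_, ?_⟩, ?_, ?_, ?_⟩
    · -- completeness of each level of G
      intro i u hu hcauchy
      obtain ⟨x, hxi, hconv⟩ := S.level_complete i u
        (fun n => (Submodule.mem_inf.mp (hu n)).2) hcauchy
      obtain ⟨D, hD, hDle⟩ := S.chain_bound i
      have hxG : x ∈ G := by
        rw [hGmem]
        by_contra hne
        have hpos : 0 < ‖f x‖ := norm_pos_iff.mpr hne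
        set δ := ‖f x‖ / ((‖f‖ + 1) * D) with hδ
        have hδpos : 0 < δ := div_pos hpos (by positivity)
        have hδeq : (‖f‖ + 1) * D * δ = ‖f x‖ := by
          rw [hδ]; field_simp
        obtain ⟨N, hN⟩ := hconv δ hδpos
        have h1 := hN N (le_refl N)
        have hmemN : u N - x ∈ S.level i :=
          Submodule.sub_mem _ (Submodule.mem_inf.mp (hu N)).2 hxi
        have h2 : ‖u N - x‖ ≤ D * S.lnorm i (u N - x) := by
          rw [← S.lnorm_zero_eq]; exact hDle _ hmemN
        have h3 : f x = f (x - u N) := by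
          rw [map_sub, (hGmem (u N)).mp (Submodule.mem_inf.mp (hu N)).1, sub_zero]
        have h4 : ‖f x‖ ≤ ‖f‖ * ‖x - u N‖ := by
          rw [h3]; exact f.le_opNorm _
        rw [norm_sub_rev] at h4
        have h5 : ‖f x‖ ≤ ‖f‖ * (D * S.lnorm i (u N - x)) :=
          le_trans h4 (mul_le_mul_of_nonneg_left h2 (norm_nonneg f))
        have h6 : ‖f‖ * (D * S.lnorm i (u N - x)) ≤ ‖f‖ * (D * δ) :=
          mul_le_mul_of_nonneg_left (mul_le_mul_of_nonneg_left h1.le hD.le) (norm_nonneg f)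
        have h7 : ‖f‖ * (D * δ) < (‖f‖ + 1) * (D * δ) :=
          mul_lt_mul_of_pos_right (by linarith) (by positivity)
        rw [← mul_assoc] at h7
        linarith
      exact ⟨x, Submodule.mem_inf.mpr ⟨hxG, hxi⟩, hconv⟩
    · -- density of smooth points of G
      intro m x hx ε hε
      have hxG : x ∈ G := (Submodule.mem_inf.mp hx).1
      have hxm : x ∈ S.level m := (Submodule.mem_inf.mp hx).2
      obtain ⟨K, hK0, hKle⟩ := S.proj_bound F hF f m
      obtain ⟨D, hD, hDle⟩ := S.chain_bound m
      have hpos1 : (0:ℝ) < 1 + K * D := by nlinarith [mul_nonneg hK0 hD.le]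
      set δ := ε / (1 + K * D) with hδ
      have hδpos : 0 < δ := div_pos hε hpos1
      have h5 : (1 + K * D) * δ = ε := by rw [hδ]; field_simp
      obtain ⟨y, hy, hxy⟩ := S.smooth_dense m x hxm δ hδpos
      have hy' : ∀ i, y ∈ S.level i := fun i => (S.mem_smoothPoints' y).mp hy i
      refine ⟨y - ((f y : F) : E), Submodule.mem_inf.mpr ⟨hsub_mem_G y, ?_⟩, ?_⟩
      · exact Submodule.sub_mem _ hy (hfx_smooth y)
      · have hfy : (f y : F) = f (y - x) := by
          rw [map_sub, (hGmem x).mp hxG, sub_zero]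
        have h1 : S.lnorm m ((f y : F) : E) ≤ K * ‖y - x‖ := by
          rw [hfy]; exact hKle (y - x)
        have hyx_mem : y - x ∈ S.level m := Submodule.sub_mem _ (hy' m) hxm
        have h2 : ‖y - x‖ ≤ D * S.lnorm m (y - x) := by
          rw [← S.lnorm_zero_eq]; exact hDle _ hyx_mem
        have h3 : S.lnorm m (y - x) = S.lnorm m (x - y) := by
          rw [← S.lnorm_neg' m (x - y), neg_sub]
        have heq : x - (y - ((f y : F) : E)) = (x - y) + ((f y : F) : E) := by abel
        have hxy_mem : x - y ∈ S.level m := Submodule.sub_mem _ hxm (hy' m)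
        have h4 := S.lnorm_add m (x - y) hxy_mem (((f y : F) : E)) (hfx_mem y m)
        rw [heq]
        nlinarith [S.lnorm_nonneg m (x - y), S.lnorm_nonneg m (y - x),
          mul_nonneg hK0 hD.le, S.lnorm_nonneg m (((f y : F) : E)), norm_nonneg (y - x)]
    · -- F ⊓ G = ⊥
      rw [eq_bot_iff]
      intro x hx
      have hxF : x ∈ F := (Submodule.mem_inf.mp hx).1
      have hxG : x ∈ G := (Submodule.mem_inf.mp hx).2
      have h := hPF x hxF
      rw [(hGmem x).mp hxG] at h
      rw [Submodule.mem_bot]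
      simpa using h.symm
    · -- sup condition
      intro i
      apply le_antisymm
      · exact sup_le inf_le_right inf_le_right
      · intro x hx
        rw [Submodule.mem_sup]
        exact ⟨((f x : F) : E), Submodule.mem_inf.mpr ⟨(f x).2, hfx_mem x i⟩,
          x - ((f x : F) : E),
          Submodule.mem_inf.mpr ⟨hsub_mem_G x, Submodule.sub_mem _ hx (hfx_mem x i)⟩,
          by abel⟩
    · -- boundedness of the projection
      intro i
      obtain ⟨K, hK0, hKle⟩ := S.proj_bound F hF f i
      obtain ⟨D, hD, hDle⟩ := S.chain_bound i
      refine ⟨K * D + 1, by nlinarith [mul_nonneg hK0 hD.le], ?_⟩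
      intro x hxm y hym
      have hxF : x ∈ F := (Submodule.mem_inf.mp hxm).1
      have hyG : y ∈ G := (Submodule.mem_inf.mp hym).1
      have hxy_mem : x + y ∈ S.level i :=
        Submodule.add_mem _ (S.smoothPoints_le' i (hF hxF)) (Submodule.mem_inf.mp hym).2
      have h1 : ((f (x + y) : F) : E) = x := by
        rw [map_add]
        have h2 : f y = 0 := (hGmem y).mp hyG
        rw [h2, add_zero]
        exact hPF x hxF
      have h3 : S.lnorm i x ≤ K * ‖x + y‖ := by
        have h3' := hKle (x + y)
        rw [h1] at h3'
        exact h3'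
      have h4 : ‖x + y‖ ≤ D * S.lnorm i (x + y) := by
        rw [← S.lnorm_zero_eq]; exact hDle _ hxy_mem
      nlinarith [S.lnorm_nonneg i (x + y), norm_nonneg (x + y)]
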